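/- Let (A, A*) be a tridiagonal pair on V with eigenspace orderings V_0, ..., V_d of A and V*_0, ..., V*_d of A*, with eigenvalues θ_0, ..., θ_d of A, and let τ_i = (λ − θ_0)···(λ − θ_{i−1}). For 0 ≤ i ≤ d define U_i = (V*_0 + V*_1 + ··· + V*_i) ∩ (V_i + V_{i+1} + ··· + V_d). Then τ_i(A) U_0 ⊆ U_i for 0 ≤ i ≤ d. -/

import Mathlib

open Polynomial

/-- A tridiagonal pair on `V`, with eigenspace orderings `Ev 0, ..., Ev d` of `A`
(with eigenvalues `θ 0, ..., θ d`) and `Ew 0, ..., Ew d` of `B = A*`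
(with eigenvalues `θ' 0, ..., θ' d`).  For indices `i > d` we set `Ev i = ⊥`,
`Ew i = ⊥`, encoding the conventions `V_{-1} = 0`, `V_{d+1} = 0`
(note `Ev (0 - 1) = Ev 0` by truncated subtraction, which is harmless in the
tridiagonal conditions below since `Ev i` appears in the sum anyway). -/
structure TridiagonalPair (K V : Type*) [Field K] [AddCommGroup V] [Module K V]
    [FiniteDimensional K V] where
  A : Module.End K V
  B : Module.End K V
  d : ℕ
  Ev : ℕ → Submodule K V
  Ew : ℕ → Submodule K V
  θ : ℕ → K
  θ' : ℕ → K
  hEv_eig : ∀ i ≤ d, Ev i = Module.End.eigenspace A (θ i)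
  hEv_ne : ∀ i ≤ d, Ev i ≠ ⊥
  hEv_all : ∀ μ : K, Module.End.eigenspace A μ ≠ ⊥ → ∃ i ≤ d, θ i = μ
  hθ_inj : ∀ i ≤ d, ∀ j ≤ d, θ i = θ j → i = j
  hEv_top : (⨆ i ∈ Finset.range (d + 1), Ev i) = ⊤
  hEv_bot : ∀ i, d < i → Ev i = ⊥
  hEw_eig : ∀ i ≤ d, Ew i = Module.End.eigenspace B (θ' i)
  hEw_ne : ∀ i ≤ d, Ew i ≠ ⊥
  hEw_all : ∀ μ : K, Module.End.eigenspace B μ ≠ ⊥ → ∃ i ≤ d, θ' i = μ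
  hθ'_inj : ∀ i ≤ d, ∀ j ≤ d, θ' i = θ' j → i = j
  hEw_top : (⨆ i ∈ Finset.range (d + 1), Ew i) = ⊤
  hEw_bot : ∀ i, d < i → Ew i = ⊥
  hTriB : ∀ i ≤ d, ∀ v ∈ Ev i, B v ∈ Ev (i - 1) ⊔ Ev i ⊔ Ev (i + 1)
  hTriA : ∀ i ≤ d, ∀ v ∈ Ew i, A v ∈ Ew (i - 1) ⊔ Ew i ⊔ Ew (i + 1)
  hIrr : ∀ W : Submodule K V, (∀ v ∈ W, A v ∈ W) → (∀ v ∈ W, B v ∈ W) →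
    W = ⊥ ∨ W = ⊤

/-- The polynomial `τ_i = (λ - θ_0)(λ - θ_1) ⋯ (λ - θ_{i-1})`. -/
noncomputable def tau {K : Type*} [Field K] (θ : ℕ → K) (i : ℕ) : Polynomial K :=
  ∏ k ∈ Finset.range i, (X - C (θ k))

/-- With `U_i = (V*_0 + ⋯ + V*_i) ∩ (V_i + ⋯ + V_d)` the split decomposition,
`τ_i(A) U_0 ⊆ U_i` for `0 ≤ i ≤ d`. -/
theorem stmt5 {K V : Type*} [Field K] [AddCommGroup V] [Module K V]
    [FiniteDimensional K V] (hpos : 0 < Module.finrank K V)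
    (p : TridiagonalPair K V)
    (U : ℕ → Submodule K V)
    (hU : ∀ i, U i = (⨆ h ∈ Finset.range (i + 1), p.Ew h) ⊓
      (⨆ h ∈ Finset.Icc i p.d, p.Ev h)) :
    ∀ i ≤ p.d, ∀ v ∈ U 0, (aeval p.A (tau p.θ i)) v ∈ U i := by
  have key : ∀ i, ∀ w ∈ U i, (p.A - (p.θ i) • 1) w ∈ U (i + 1) := by
    intro i w hw
    rw [hU] at hw ⊢
    obtain ⟨hw1, hw2⟩ := hw
    constructor
    · -- first component
      have hle : ∀ j, j < i + 2 →
          p.Ew j ≤ ⨆ h ∈ Finset.range (i + 2), p.Ew h := fun j hj =>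
        le_iSup₂_of_le j (Finset.mem_range.mpr hj) le_rfl
      have hA : ∀ h ∈ Finset.range (i + 1), p.Ew h ≤
          (⨆ h ∈ Finset.range (i + 2), p.Ew h).comap (p.A - (p.θ i) • 1) := by
        intro h hh v hv
        have hhle : h ≤ i := Nat.lt_succ_iff.mp (Finset.mem_range.mp hh)
        simp only [Submodule.mem_comap, LinearMap.sub_apply, LinearMap.smul_apply,
          Module.End.one_apply]
        have hAv : p.A v ∈ ⨆ h ∈ Finset.range (i + 2), p.Ew h := by
          rcases le_or_gt h p.d with hd | hd
          · have := p.hTriA h hd v hv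
            have hsub : p.Ew (h - 1) ⊔ p.Ew h ⊔ p.Ew (h + 1) ≤
                ⨆ h ∈ Finset.range (i + 2), p.Ew h := by
              refine sup_le (sup_le ?_ ?_) ?_ <;> apply hle <;> omega
            exact hsub this
          · have : v = 0 := by
              have := p.hEw_bot h hd
              rw [this] at hv; simpa using hv
            simp [this]
        exact Submodule.sub_mem _ hAv
          (Submodule.smul_mem _ _ (hle h (by omega) hv))
      exact iSup₂_le hA hw1
    · -- second component
      have hB : ∀ h ∈ Finset.Icc i p.d, p.Ev h ≤
          (⨆ h ∈ Finset.Icc (i + 1) p.d, p.Ev h).comap (p.A - (p.θ i) • 1) := by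
        intro h hh v hv
        obtain ⟨hih, hhd⟩ := Finset.mem_Icc.mp hh
        have heig : p.A v = p.θ h • v := by
          have := p.hEv_eig h hhd
          rw [this] at hv
          exact Module.End.mem_eigenspace_iff.mp hv
        simp only [Submodule.mem_comap, LinearMap.sub_apply, LinearMap.smul_apply,
          Module.End.one_apply, heig, ← sub_smul]
        rcases eq_or_lt_of_le hih with heq | hlt
        · simp [← heq]
        · exact (le_iSup₂_of_le (f := fun h (_ : h ∈ Finset.Icc (i + 1) p.d) => p.Ev h) h
            (Finset.mem_Icc.mpr ⟨hlt, hhd⟩)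
            (le_refl (p.Ev h)) : p.Ev h ≤ _) (Submodule.smul_mem _ _ hv)
      exact iSup₂_le hB hw2
  intro i hi v hv
  induction i with
  | zero => simpa [tau] using hv
  | succ n ih =>
    have h1 := key n _ (ih (Nat.le_of_succ_le hi))
    have heq : (aeval p.A (tau p.θ (n + 1))) v =
        (p.A - (p.θ n) • 1) ((aeval p.A (tau p.θ n)) v) := by
      rw [tau, Finset.prod_range_succ, mul_comm, map_mul]
      simp [tau, Module.End.mul_apply, Algebra.algebraMap_eq_smul_one]
    rw [heq]
    exact h1
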